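/- Let K be arbitrary. Suppose a labeled graph contains none of the following three structures: (1) an M-color node with M ≥ 4; (2) a 3-color node joined by an edge to a node whose incident edges carry at least 2 distinct labels; (3) a normal 2-color node joined by an edge to a 2-color node whose color set differs from its own. Suppose moreover that for every internal edge of the graph, every residing path of that edge contains at least one 1-color node (this holds vacuously when there are no internal edges). Then for every prime p with p > 4·|E|, where |E| is the number of edges, there exists a storage code with source alphabet S = (Fin 4 → ZMod p) and coded alphabet T = (Fin 3 → ZMod p); in particular symbol rate 4/3 is achievable over such graphs. -/

import Mathlib

/-- A storage code problem over a labeled graph: `N` nodes, `K` sources, and a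
symmetric labeling `t` of pairs of nodes by sources, with no self-loops. -/
structure LabeledGraph (N K : ℕ) where
  t : Fin N → Fin N → Option (Fin K)
  symm : ∀ i j, t i j = t j i
  irrefl : ∀ i, t i i = none

/-- `V` is a storage code over `G`: from the coded symbols at the two endpoints of
any `W_k`-edge, the source symbol `W_k` can be decoded. -/
def IsStorageCode {N K : ℕ} (G : LabeledGraph N K) (S T : Type)
    (V : Fin N → (Fin K → S) → T) : Prop :=
  ∀ i j k, G.t i j = some k →
    ∃ D : T → T → S, ∀ w : Fin K → S, D (V i w) (V j w) = w k

/-- The set of source labels carried by the edges incident to node `i`. -/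
def colorSet {N K : ℕ} (G : LabeledGraph N K) (i : Fin N) : Set (Fin K) :=
  {k | ∃ j, G.t i j = some k}

/-- Node `i` is `M`-color: its incident edges carry exactly `M` distinct labels. -/
def IsMColor {N K : ℕ} (G : LabeledGraph N K) (i : Fin N) (M : ℕ) : Prop :=
  (colorSet G i).ncard = M
/-- A `W_k`-path: a sequence of `P ≥ 1` consecutive `W_k`-edges whose unordered
edges are pairwise distinct. -/
def IsPath {N K : ℕ} (G : LabeledGraph N K) (k : Fin K) (P : ℕ)
    (v : Fin (P + 1) → Fin N) : Prop :=
  1 ≤ P ∧ (∀ q : Fin P, G.t (v q.castSucc) (v q.succ) = some k) ∧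
    Function.Injective (fun q : Fin P => s(v q.castSucc, v q.succ))
/-- A special `2`-color node: for one of its two colors `k`, every node joined to it
by a `W_k`-edge is `1`-color. -/
def IsSpecial2Color {N K : ℕ} (G : LabeledGraph N K) (i : Fin N) : Prop :=
  IsMColor G i 2 ∧ ∃ k ∈ colorSet G i, ∀ j, G.t i j = some k → IsMColor G j 1

/-- A normal `2`-color node: a `2`-color node that is not special. -/
def IsNormal2Color {N K : ℕ} (G : LabeledGraph N K) (i : Fin N) : Prop :=
  IsMColor G i 2 ∧ ¬ IsSpecial2Color G i
/-- The number of (unordered) edges of the labeled graph. -/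
noncomputable def edgeCount {N K : ℕ} (G : LabeledGraph N K) : ℕ :=
  {e : Sym2 (Fin N) | ∃ i j, e = s(i, j) ∧ G.t i j ≠ none}.ncard

namespace RateAux

open Relation

variable {N K : ℕ}

/-- two-colorness -/
def two (G : LabeledGraph N K) (i : Fin N) : Prop := (colorSet G i).ncard = 2

/-- a `2-2` edge of color `c` -/
def stp (G : LabeledGraph N K) (c : Fin K) (i j : Fin N) : Prop :=
  two G i ∧ two G j ∧ G.t i j = some c

lemma stp_symm {G : LabeledGraph N K} {c : Fin K} {i j : Fin N}
    (h : stp G c i j) : stp G c j i :=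
  ⟨h.2.1, h.1, (G.symm j i).trans h.2.2⟩

/-- connectivity through `2-2` edges of color `c` -/
def conn (G : LabeledGraph N K) (c : Fin K) : Fin N → Fin N → Prop :=
  EqvGen (stp G c)

lemma conn_cases {G : LabeledGraph N K} {c : Fin K} {i j : Fin N}
    (h : conn G c i j) :
    i = j ∨ ((∃ x, stp G c i x) ∧ (∃ x, stp G c j x)) := by
  induction h with
  | rel a b hab => exact Or.inr ⟨⟨b, hab⟩, ⟨a, stp_symm hab⟩⟩
  | refl a => exact Or.inl rfl
  | symm a b _ ih => rcases ih with h | ⟨h1, h2⟩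
                     · exact Or.inl h.symm
                     · exact Or.inr ⟨h2, h1⟩
  | trans a b c' _ _ ih1 ih2 =>
      rcases ih1 with h | ⟨h1, h2⟩
      · rcases ih2 with h' | ⟨h1', h2'⟩
        · exact Or.inl (h.trans h')
        · exact Or.inr ⟨h ▸ h1', h2'⟩
      · rcases ih2 with h' | ⟨h1', h2'⟩
        · exact Or.inr ⟨h1, h' ▸ h2⟩
        · exact Or.inr ⟨h1, h2'⟩

/-- the setoid of `c`-components -/
def st (G : LabeledGraph N K) (c : Fin K) : Setoid (Fin N) := EqvGen.setoid (stp G c)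

/-- representative of the `c`-component -/
noncomputable def rp (G : LabeledGraph N K) (c : Fin K) (i : Fin N) : Fin N :=
  (Quotient.mk (st G c) i).out

lemma conn_rp (G : LabeledGraph N K) (c : Fin K) (i : Fin N) :
    conn G c i (rp G c i) := by
  have h : (Quotient.mk (st G c) (rp G c i)) = Quotient.mk (st G c) i :=
    Quotient.out_eq _
  exact (EqvGen.is_equivalence _).symm (Quotient.exact h)

lemma rp_eq_of_conn {G : LabeledGraph N K} {c : Fin K} {i j : Fin N}
    (h : conn G c i j) : rp G c i = rp G c j := by
  unfold rp
  rw [Quotient.sound (a := i) (b := j) h]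

lemma conn_of_rp_eq {G : LabeledGraph N K} {c : Fin K} {i j : Fin N}
    (h : rp G c i = rp G c j) : conn G c i j := by
  have h1 := conn_rp G c i
  have h2 := conn_rp G c j
  exact (EqvGen.is_equivalence _).trans (h ▸ h1) ((EqvGen.is_equivalence _).symm h2)

lemma rp_eq_self {G : LabeledGraph N K} {c : Fin K} {i : Fin N}
    (h : ∀ x, ¬ stp G c i x) : rp G c i = i := by
  rcases conn_cases (conn_rp G c i) with h' | ⟨⟨x, hx⟩, _⟩
  · exact h'.symm
  · exact absurd hx (h x)

end RateAux

namespace RateAux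

open Relation

variable {N K : ℕ}

/-- simple graph of 2-2 edges of color c -/
def sg (G : LabeledGraph N K) (c : Fin K) : SimpleGraph (Fin N) where
  Adj := stp G c
  symm := ⟨fun _ _ h => stp_symm h⟩
  loopless := by
    constructor
    intro i h
    have := h.2.2
    rw [G.irrefl i] at this
    exact nomatch this

lemma reachable_of_conn {G : LabeledGraph N K} {c : Fin K} {i j : Fin N}
    (h : conn G c i j) : (sg G c).Reachable i j := by
  induction h with
  | rel a b hab => exact SimpleGraph.Adj.reachable hab
  | refl a => exact SimpleGraph.Reachable.refl a
  | symm a b _ ih => exact ih.symm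
  | trans a b c' _ _ ih1 ih2 => exact ih1.trans ih2

lemma getVert_mem_support {V : Type*} {G : SimpleGraph V} {u v : V}
    (p : G.Walk u v) (n : ℕ) : p.getVert n ∈ p.support := by
  induction p generalizing n with
  | nil => simp [SimpleGraph.Walk.getVert]
  | cons h q ih =>
      cases n with
      | zero => simp [SimpleGraph.Walk.getVert]
      | succ m =>
          rw [SimpleGraph.Walk.support_cons]
          exact List.mem_cons_of_mem _ (ih m)

lemma getVert_inj {V : Type*} {G : SimpleGraph V} {u v : V}
    {p : G.Walk u v} (hp : p.IsPath) :
    ∀ m n, m ≤ p.length → n ≤ p.length → p.getVert m = p.getVert n → m = n := by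
  induction p with
  | nil => intro m n hm hn _; simp at hm hn; omega
  | cons h q ih =>
      rw [SimpleGraph.Walk.cons_isPath_iff] at hp
      intro m n hm hn hmn
      cases m with
      | zero =>
          cases n with
          | zero => rfl
          | succ n' =>
              exfalso
              apply hp.2
              have : SimpleGraph.Walk.getVert (SimpleGraph.Walk.cons h q) (n' + 1)
                  = q.getVert n' := rfl
              rw [SimpleGraph.Walk.getVert_zero] at hmn
              rw [hmn]
              exact getVert_mem_support q n'
      | succ m' =>
          cases n with
          | zero =>
              exfalso
              apply hp.2
              have : SimpleGraph.Walk.getVert (SimpleGraph.Walk.cons h q) (m' + 1)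
                  = q.getVert m' := rfl
              rw [SimpleGraph.Walk.getVert_zero] at hmn
              rw [← hmn]
              exact getVert_mem_support q m'
          | succ n' =>
              have hm' : m' ≤ q.length := by
                simp [SimpleGraph.Walk.length_cons] at hm; omega
              have hn' : n' ≤ q.length := by
                simp [SimpleGraph.Walk.length_cons] at hn; omega
              have : q.getVert m' = q.getVert n' := hmn
              have := ih hp.1 m' n' hm' hn' this
              omega

/-- Key structural lemma from `hres`: the two endpoints of a 2-2 edge of color `k`
lie in different `c`-components for any other color `c`. -/
lemma not_conn_of_hres {G : LabeledGraph N K}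
    (hres : ∀ i j k, G.t i j = some k → ∀ k', k' ≠ k →
      ∀ P (v : Fin (P + 1) → Fin N), IsPath G k' P v →
        v 0 = i → v (Fin.last P) = j → ∃ q : Fin (P + 1), IsMColor G (v q) 1)
    {i j : Fin N} {k c : Fin K} (hij : G.t i j = some k)
    (hti : two G i) (htj : two G j) (hc : c ≠ k) : ¬ conn G c i j := by
  intro hconn
  have hne : i ≠ j := by
    intro h
    rw [h, G.irrefl j] at hij
    exact nomatch hij
  obtain ⟨w0⟩ := reachable_of_conn hconn
  set p : (sg G c).Walk i j := (w0.toPath : (sg G c).Walk i j) with hp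
  have hpath : p.IsPath := w0.toPath.2
  set L := p.length with hL
  have hL1 : 1 ≤ L := by
    rcases Nat.eq_zero_or_pos L with h0 | h
    · exact absurd (SimpleGraph.Walk.eq_of_length_eq_zero (hL ▸ h0)) hne
    · exact h
  set v : Fin (L + 1) → Fin N := fun q => p.getVert q with hv
  have hIsPath : IsPath G c L v := by
    refine ⟨hL1, ?_, ?_⟩
    · intro q
      have hadj := p.adj_getVert_succ (i := (q : ℕ)) q.isLt
      have : G.t (p.getVert q) (p.getVert ((q : ℕ) + 1)) = some c := hadj.2.2
      simpa [hv, Fin.coe_castSucc, Fin.val_succ] using this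
    · intro q1 q2 heq
      simp only [hv] at heq
      rw [Sym2.eq_iff] at heq
      have hinj := getVert_inj hpath
      rcases heq with ⟨ha, _⟩ | ⟨ha, hb⟩
      · have : ((q1.castSucc : Fin (L+1)).1 : ℕ) = _ := rfl
        have := hinj (q1 : ℕ) (q2 : ℕ) (by omega) (by omega)
          (by simpa [Fin.coe_castSucc] using ha)
        exact Fin.ext this
      · have h1 := hinj (q1 : ℕ) ((q2 : ℕ) + 1) (by omega) (by omega)
          (by simpa [Fin.coe_castSucc, Fin.val_succ] using ha)
        have h2 := hinj ((q1 : ℕ) + 1) (q2 : ℕ) (by omega) (by omega)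
          (by simpa [Fin.coe_castSucc, Fin.val_succ] using hb)
        omega
  have hv0 : v 0 = i := by
    simp [hv, SimpleGraph.Walk.getVert_zero]
  have hvl : v (Fin.last L) = j := by
    simp only [hv, Fin.val_last]
    exact p.getVert_length
  obtain ⟨q, hq⟩ := hres i j k hij c hc L v hIsPath hv0 hvl
  -- every vertex of the walk is 2-color
  have htwo : two G (v q) := by
    rcases Nat.lt_or_ge (q : ℕ) L with h | h
    · exact (p.adj_getVert_succ h).1
    · have : (q : ℕ) = L := by omega
      have : v q = j := by
        simp only [hv, this]
        exact p.getVert_length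
      rw [this]; exact htj
  rw [IsMColor] at hq
  rw [two] at htwo
  omega

/-! ### colorSet utilities -/

variable {G : LabeledGraph N K}

lemma mem_colorSet {i j : Fin N} {k : Fin K} (h : G.t i j = some k) :
    k ∈ colorSet G i := ⟨j, h⟩

lemma colorSet_finite (G : LabeledGraph N K) (i : Fin N) : (colorSet G i).Finite :=
  Set.toFinite _

lemma ncard_pos {i j : Fin N} {k : Fin K} (h : G.t i j = some k) :
    1 ≤ (colorSet G i).ncard := by
  rw [Nat.one_le_iff_ne_zero]
  intro h0
  have := (Set.ncard_eq_zero (colorSet_finite G i)).mp h0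
  rw [Set.eq_empty_iff_forall_notMem] at this
  exact this k (mem_colorSet h)

lemma colorSet_eq_singleton {i : Fin N} {k : Fin K}
    (h1 : (colorSet G i).ncard = 1) (hk : k ∈ colorSet G i) :
    colorSet G i = {k} := by
  obtain ⟨a, ha⟩ := Set.ncard_eq_one.mp h1
  rw [ha] at hk ⊢
  rw [Set.mem_singleton_iff] at hk
  rw [hk]

/-- the other color of a node -/
noncomputable def oc (G : LabeledGraph N K) (i : Fin N) (k : Fin K) : Fin K :=
  open Classical in
  if h : ∃ c ∈ colorSet G i, c ≠ k then h.choose else k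

lemma oc_spec {i : Fin N} {k : Fin K} (h2 : two G i) (hk : k ∈ colorSet G i) :
    oc G i k ∈ colorSet G i ∧ oc G i k ≠ k := by
  obtain ⟨a, b, hab, hset⟩ := Set.ncard_eq_two.mp h2
  have hex : ∃ c ∈ colorSet G i, c ≠ k := by
    rcases Set.eq_or_mem_of_mem_insert (hset ▸ hk) with h | h
    · exact ⟨b, by rw [hset]; right; rfl, fun hbk => hab (h ▸ hbk ▸ rfl)⟩
    · rw [Set.mem_singleton_iff] at h
      exact ⟨a, by rw [hset]; left; rfl, fun hak => hab (h ▸ hak ▸ rfl)⟩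
  rw [oc]
  rw [dif_pos hex]
  exact ⟨hex.choose_spec.1, hex.choose_spec.2⟩

lemma oc_mem {i : Fin N} {k : Fin K} (h2 : two G i) (hk : k ∈ colorSet G i) :
    oc G i k ∈ colorSet G i := (oc_spec h2 hk).1

lemma oc_ne {i : Fin N} {k : Fin K} (h2 : two G i) (hk : k ∈ colorSet G i) :
    oc G i k ≠ k := (oc_spec h2 hk).2

lemma colorSet_eq_pair {i : Fin N} {k : Fin K} (h2 : two G i) (hk : k ∈ colorSet G i) :
    colorSet G i = {k, oc G i k} := by
  obtain ⟨a, b, hab, hset⟩ := Set.ncard_eq_two.mp h2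
  have h1 := oc_mem h2 hk
  have hne := oc_ne h2 hk
  rw [hset] at hk h1 ⊢
  have hk' : k = a ∨ k = b := by simpa using hk
  have h1' : oc G i k = a ∨ oc G i k = b := by simpa using h1
  rcases hk' with hk' | hk' <;> rcases h1' with h1' | h1'
  · exact absurd (h1'.trans hk'.symm) hne
  · rw [← hk', ← h1']
  · rw [← hk', ← h1']
    exact Set.pair_comm _ _
  · exact absurd (h1'.trans hk'.symm) hne

lemma oc_unique {i : Fin N} {k c : Fin K} (h2 : two G i) (hk : k ∈ colorSet G i)
    (hc : c ∈ colorSet G i) (hne : c ≠ k) : c = oc G i k := by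
  rw [colorSet_eq_pair h2 hk] at hc
  rcases hc with hc | hc
  · exact absurd hc hne
  · exact hc

lemma oc_oc {i : Fin N} {k : Fin K} (h2 : two G i) (hk : k ∈ colorSet G i) :
    oc G i (oc G i k) = k :=
  (oc_unique h2 (oc_mem h2 hk) hk (oc_ne h2 hk).symm).symm

lemma oc_congr {i j : Fin N} {k : Fin K} (h2i : two G i) (h2j : two G j)
    (hset : colorSet G i = colorSet G j) (hk : k ∈ colorSet G i) :
    oc G i k = oc G j k :=
  oc_unique h2j (hset ▸ hk) (hset ▸ oc_mem h2i hk) (oc_ne h2i hk)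

/-- the light (special) color of a special node -/
noncomputable def lc {i : Fin N} (hs : IsSpecial2Color G i) : Fin K :=
  hs.2.choose

lemma lc_mem {i : Fin N} (hs : IsSpecial2Color G i) : lc hs ∈ colorSet G i :=
  hs.2.choose_spec.1

lemma lc_one {i : Fin N} (hs : IsSpecial2Color G i) :
    ∀ j, G.t i j = some (lc hs) → IsMColor G j 1 :=
  hs.2.choose_spec.2

/-- slot index of a color at a 3-color node -/
noncomputable def ordIdx (G : LabeledGraph N K) (i : Fin N) (k : Fin K) : ℕ :=
  (colorSet G i ∩ Set.Iio k).ncard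

lemma ordIdx_lt {i : Fin N} {k : Fin K} (h3 : (colorSet G i).ncard = 3)
    (hk : k ∈ colorSet G i) : ordIdx G i k < 3 := by
  have hsub : colorSet G i ∩ Set.Iio k ⊆ colorSet G i \ {k} := by
    intro c hc
    refine ⟨hc.1, ?_⟩
    intro h
    rw [Set.mem_singleton_iff] at h
    exact absurd (h ▸ hc.2) (lt_irrefl k)
  have := Set.ncard_le_ncard hsub (colorSet_finite G i).diff
  rw [Set.ncard_diff_singleton_of_mem hk, h3] at this
  unfold ordIdx
  omega

lemma ordIdx_strict {i : Fin N} {k k' : Fin K} (hk : k ∈ colorSet G i)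
    (hlt : k < k') : ordIdx G i k < ordIdx G i k' := by
  apply Set.ncard_lt_ncard
  · constructor
    · exact Set.inter_subset_inter_right _ (fun c hc => lt_trans hc hlt)
    · intro hsub
      have : k ∈ colorSet G i ∩ Set.Iio k := hsub ⟨hk, hlt⟩
      exact absurd this.2 (lt_irrefl k)
  · exact (colorSet_finite G i).inter_of_left _

lemma ordIdx_inj {i : Fin N} {k k' : Fin K} (hk : k ∈ colorSet G i)
    (hk' : k' ∈ colorSet G i) (hne : k ≠ k') : ordIdx G i k ≠ ordIdx G i k' := by
  rcases lt_or_gt_of_ne hne with h | h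
  · exact Nat.ne_of_lt (ordIdx_strict hk h)
  · exact (Nat.ne_of_lt (ordIdx_strict hk' h)).symm

/-! ### The storage code construction -/

section Code

variable {p : ℕ}

/-- a triple of field elements as a `Fin 3`-vector -/
def rows (A B C : ZMod p) : Fin 3 → ZMod p :=
  fun r => if r = 0 then A else if r = 1 then B else C

@[simp] lemma rows_zero (A B C : ZMod p) : rows A B C 0 = A := rfl
@[simp] lemma rows_one (A B C : ZMod p) : rows A B C 1 = B := rfl
@[simp] lemma rows_two (A B C : ZMod p) : rows A B C 2 = C := rfl

variable (G : LabeledGraph N K) (f : Fin N → ZMod p) (θ : ZMod p)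

/-- the heavy-pair parameter of node `i` on its `k`-side -/
noncomputable def Lam (i : Fin N) (k : Fin K) : ZMod p :=
  f (rp G (oc G i k) i) * θ

/-- the generic mixed row of node `i` on its `k`-side -/
noncomputable def arow (i : Fin N) (k : Fin K) (x : Fin 4 → ZMod p) : ZMod p :=
  x 0 + f i * θ * x 1 + Lam G f θ i k * x 2 + f i * θ * Lam G f θ i k * x 3

open Classical in
/-- the contribution of color `k` to the symbol of node `i` -/
noncomputable def contrib (i : Fin N) (k : Fin K) (x : Fin 4 → ZMod p) :
    Fin 3 → ZMod p :=
  if (colorSet G i).ncard = 1 then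
    rows (x 1) (x 2) (x 0 + f i * θ * x 3)
  else if (colorSet G i).ncard = 2 then
    (if hs : IsSpecial2Color G i then
      (if k = lc hs then rows 0 0 (arow G f θ i k x)
       else rows (x 0 + Lam G f θ i k * x 2) (x 1 + Lam G f θ i k * x 3) 0)
     else
      (if k < oc G i k then
        rows (arow G f θ i k x) 0 (x 1 + Lam G f θ i k * x 3)
       else rows 0 (arow G f θ i k x) (-(x 1 + Lam G f θ i k * x 3))))
  else if (colorSet G i).ncard = 3 then
    (fun r => if (r : ℕ) = ordIdx G i k then x 0 + f i * θ * x 3 else 0)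
  else 0

open Classical in
/-- the encoding map of the storage code -/
noncomputable def Vm (i : Fin N) (w : Fin K → Fin 4 → ZMod p) : Fin 3 → ZMod p :=
  ∑ k, if k ∈ colorSet G i then contrib G f θ i k (w k) else 0

set_option maxHeartbeats 1000000 in
lemma contrib_sub (i : Fin N) (k : Fin K) (x y : Fin 4 → ZMod p) :
    contrib G f θ i k (x - y) = contrib G f θ i k x - contrib G f θ i k y := by
  unfold contrib arow rows
  split_ifs <;> funext r <;>
    simp only [Pi.sub_apply, Pi.zero_apply, sub_zero, sub_self] <;>
    (first | (split_ifs <;> ring) | ring | simp)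

lemma Vm_sub (i : Fin N) (w w' : Fin K → Fin 4 → ZMod p) :
    Vm G f θ i (w - w') = Vm G f θ i w - Vm G f θ i w' := by
  classical
  unfold Vm
  rw [← Finset.sum_sub_distrib]
  apply Finset.sum_congr rfl
  intro k _
  split_ifs with h
  · rw [Pi.sub_apply, contrib_sub]
  · simp

/-- extraction for 1-color nodes -/
lemma Vm_one {i : Fin N} {k : Fin K} (h1 : (colorSet G i).ncard = 1)
    (hk : k ∈ colorSet G i) (w : Fin K → Fin 4 → ZMod p) :
    Vm G f θ i w = contrib G f θ i k (w k) := by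
  classical
  unfold Vm
  rw [Finset.sum_eq_single_of_mem k (Finset.mem_univ k)]
  · rw [if_pos hk]
  · intro b _ hbk
    rw [if_neg]
    rw [colorSet_eq_singleton h1 hk]
    simpa using hbk

/-- extraction for 2-color nodes -/
lemma Vm_two {i : Fin N} {k : Fin K} (h2 : two G i)
    (hk : k ∈ colorSet G i) (w : Fin K → Fin 4 → ZMod p) :
    Vm G f θ i w = contrib G f θ i k (w k)
      + contrib G f θ i (oc G i k) (w (oc G i k)) := by
  classical
  have hne : oc G i k ≠ k := oc_ne h2 hk
  unfold Vm
  have hsplit : ∀ c : Fin K,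
      (if c ∈ colorSet G i then contrib G f θ i c (w c) else 0)
      = (if c = k then contrib G f θ i c (w c) else 0)
        + (if c = oc G i k then contrib G f θ i c (w c) else 0) := by
    intro c
    by_cases hck : c = k
    · rw [if_pos hck, if_pos (hck ▸ hk), if_neg (by rw [hck]; exact fun h => hne h.symm), add_zero]
    · by_cases hco : c = oc G i k
      · rw [if_pos hco, if_pos (hco ▸ oc_mem h2 hk), if_neg hck, zero_add]
      · rw [if_neg hck, if_neg hco, if_neg, add_zero]
        rw [colorSet_eq_pair h2 hk]
        simp [hck, hco]
  calc (∑ c, if c ∈ colorSet G i then contrib G f θ i c (w c) else 0)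
      = ∑ c, ((if c = k then contrib G f θ i c (w c) else 0)
        + (if c = oc G i k then contrib G f θ i c (w c) else 0)) :=
        Finset.sum_congr rfl (fun c _ => hsplit c)
    _ = _ := by
        rw [Finset.sum_add_distrib, Finset.sum_ite_eq' Finset.univ k,
          Finset.sum_ite_eq' Finset.univ (oc G i k)]
        simp

/-- extraction for 3-color nodes -/
lemma Vm_three {i : Fin N} {k : Fin K} (h3 : (colorSet G i).ncard = 3)
    (hk : k ∈ colorSet G i) (w : Fin K → Fin 4 → ZMod p) :
    Vm G f θ i w ⟨ordIdx G i k, ordIdx_lt h3 hk⟩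
      = w k 0 + f i * θ * w k 3 := by
  classical
  unfold Vm
  rw [Finset.sum_apply]
  rw [Finset.sum_eq_single_of_mem k (Finset.mem_univ k)]
  · rw [if_pos hk]
    unfold contrib
    rw [if_neg (by omega), if_neg (by omega), if_pos h3]
    simp
  · intro b _ hbk
    by_cases hb : b ∈ colorSet G i
    · rw [if_pos hb]
      unfold contrib
      rw [if_neg (by omega), if_neg (by omega), if_pos h3]
      simp only
      rw [if_neg]
      exact fun h => ordIdx_inj hk hb (Ne.symm hbk) h
    · rw [if_neg hb]
      rfl

end Code

/-! ### contrib branch lemmas -/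

section Branches

variable {p : ℕ} (G : LabeledGraph N K) (f : Fin N → ZMod p) (θ : ZMod p)

lemma contrib_one_eq {i : Fin N} (h1 : (colorSet G i).ncard = 1)
    (k : Fin K) (x : Fin 4 → ZMod p) :
    contrib G f θ i k x = rows (x 1) (x 2) (x 0 + f i * θ * x 3) := by
  unfold contrib; rw [if_pos h1]

lemma contrib_sp_light {i : Fin N} (h2c : (colorSet G i).ncard = 2)
    (hs : IsSpecial2Color G i) {k : Fin K} (hkl : k = lc hs) (x : Fin 4 → ZMod p) :
    contrib G f θ i k x = rows 0 0 (arow G f θ i k x) := by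
  unfold contrib; rw [if_neg (by omega), if_pos h2c, dif_pos hs, if_pos hkl]

lemma contrib_sp_heavy {i : Fin N} (h2c : (colorSet G i).ncard = 2)
    (hs : IsSpecial2Color G i) {k : Fin K} (hkl : k ≠ lc hs) (x : Fin 4 → ZMod p) :
    contrib G f θ i k x
      = rows (x 0 + Lam G f θ i k * x 2) (x 1 + Lam G f θ i k * x 3) 0 := by
  unfold contrib; rw [if_neg (by omega), if_pos h2c, dif_pos hs, if_neg hkl]

lemma contrib_n_lo {i : Fin N} (h2c : (colorSet G i).ncard = 2)
    (hns : ¬ IsSpecial2Color G i) {k : Fin K} (hlt : k < oc G i k) (x : Fin 4 → ZMod p) :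
    contrib G f θ i k x
      = rows (arow G f θ i k x) 0 (x 1 + Lam G f θ i k * x 3) := by
  unfold contrib; rw [if_neg (by omega), if_pos h2c, dif_neg hns, if_pos hlt]

lemma contrib_n_hi {i : Fin N} (h2c : (colorSet G i).ncard = 2)
    (hns : ¬ IsSpecial2Color G i) {k : Fin K} (hlt : ¬ k < oc G i k) (x : Fin 4 → ZMod p) :
    contrib G f θ i k x
      = rows 0 (arow G f θ i k x) (-(x 1 + Lam G f θ i k * x 3)) := by
  unfold contrib; rw [if_neg (by omega), if_pos h2c, dif_neg hns, if_neg hlt]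

end Branches

/-! ### the non-isolated set -/

def NI (G : LabeledGraph N K) : Set (Fin N) := {i | ∃ j, G.t i j ≠ none}

lemma mem_NI_of_edge {i j : Fin N} {k : Fin K} (h : G.t i j = some k) :
    i ∈ NI G := ⟨j, by rw [h]; exact fun hc => nomatch hc⟩

lemma rp_mem_NI {c : Fin K} {i : Fin N} (hi : i ∈ NI G) : rp G c i ∈ NI G := by
  rcases conn_cases (conn_rp G c i) with h | ⟨_, ⟨x, hx⟩⟩
  · exact h ▸ hi
  · exact mem_NI_of_edge hx.2.2

lemma edge_ne {i j : Fin N} {k : Fin K} (h : G.t i j = some k) : i ≠ j := by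
  intro hij
  rw [hij, G.irrefl] at h
  exact nomatch h

/-- cancel a common factor -/
lemma cancel3 {p : ℕ} [Fact p.Prime] {a b x : ZMod p} (h : (a - b) * x = 0)
    (hne : a ≠ b) : x = 0 := by
  rcases mul_eq_zero.mp h with h' | h'
  · exact absurd (sub_eq_zero.mp h') hne
  · exact h'

lemma funext4 {p : ℕ} {g : Fin 4 → ZMod p} (h0 : g 0 = 0) (h1 : g 1 = 0)
    (h2 : g 2 = 0) (h3 : g 3 = 0) : g = 0 := by
  funext s; fin_cases s <;> assumption

section Kernel

variable {p : ℕ} [Fact p.Prime] {G : LabeledGraph N K}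
  {f : Fin N → ZMod p} {θ : ZMod p}

/-- both endpoints 1-color -/
lemma ker11 {i j : Fin N} {k : Fin K} {w : Fin K → Fin 4 → ZMod p}
    (hf : Set.InjOn f (NI G)) (hθ0 : θ ≠ 0)
    (hedge : G.t i j = some k)
    (hni : (colorSet G i).ncard = 1) (hnj : (colorSet G j).ncard = 1)
    (hVi : Vm G f θ i w = 0) (hVj : Vm G f θ j w = 0) : w k = 0 := by
  have hji : G.t j i = some k := (G.symm j i).trans hedge
  have hkci : k ∈ colorSet G i := mem_colorSet hedge
  have hkcj : k ∈ colorSet G j := mem_colorSet hji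
  have hiNI := mem_NI_of_edge hedge
  have hjNI := mem_NI_of_edge hji
  have hfij : f i ≠ f j := fun h => edge_ne hedge (hf hiNI hjNI h)
  have e1 := (Vm_one G f θ hni hkci w).symm.trans hVi
  have e2 := (Vm_one G f θ hnj hkcj w).symm.trans hVj
  rw [contrib_one_eq G f θ hni] at e1
  rw [contrib_one_eq G f θ hnj] at e2
  have A1 := congrFun e1 0
  have A2 := congrFun e1 1
  have A3 := congrFun e1 2
  have B3 := congrFun e2 2
  simp only [rows_zero, rows_one, rows_two, Pi.zero_apply] at A1 A2 A3 B3
  have haij : f i * θ ≠ f j * θ := fun h => hfij (mul_right_cancel₀ hθ0 h)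
  have H3 : w k 3 = 0 := cancel3 (by linear_combination A3 - B3) haij
  have H0 : w k 0 = 0 := by linear_combination A3 - (f i * θ) * H3
  exact funext4 H0 A1 A2 H3

/-- 1-color and 3-color endpoints -/
lemma ker13 {i j : Fin N} {k : Fin K} {w : Fin K → Fin 4 → ZMod p}
    (hf : Set.InjOn f (NI G)) (hθ0 : θ ≠ 0)
    (hedge : G.t i j = some k)
    (hni : (colorSet G i).ncard = 1) (hnj : (colorSet G j).ncard = 3)
    (hVi : Vm G f θ i w = 0) (hVj : Vm G f θ j w = 0) : w k = 0 := by
  have hji : G.t j i = some k := (G.symm j i).trans hedge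
  have hkci : k ∈ colorSet G i := mem_colorSet hedge
  have hkcj : k ∈ colorSet G j := mem_colorSet hji
  have hiNI := mem_NI_of_edge hedge
  have hjNI := mem_NI_of_edge hji
  have hfij : f i ≠ f j := fun h => edge_ne hedge (hf hiNI hjNI h)
  have e1 := (Vm_one G f θ hni hkci w).symm.trans hVi
  rw [contrib_one_eq G f θ hni] at e1
  have A1 := congrFun e1 0
  have A2 := congrFun e1 1
  have A3 := congrFun e1 2
  have B3 := Vm_three G f θ hnj hkcj w
  rw [hVj] at B3
  simp only [rows_zero, rows_one, rows_two, Pi.zero_apply] at A1 A2 A3 B3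
  have haij : f i * θ ≠ f j * θ := fun h => hfij (mul_right_cancel₀ hθ0 h)
  have H3 : w k 3 = 0 := cancel3 (by linear_combination A3 + B3) haij
  have H0 : w k 0 = 0 := by linear_combination A3 - (f i * θ) * H3
  exact funext4 H0 A1 A2 H3

/-- 1-color and 2-color endpoints -/
lemma ker12 {i j : Fin N} {k : Fin K} {w : Fin K → Fin 4 → ZMod p}
    (hf : Set.InjOn f (NI G)) (hf0 : ∀ x ∈ NI G, f x ≠ 0) (hθ0 : θ ≠ 0)
    (hθ2 : ∀ a b c, G.t a b = some c → f a * f (rp G (oc G a c) a) * θ ≠ f b)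
    (hedge : G.t i j = some k)
    (hni : (colorSet G i).ncard = 1) (hnj : (colorSet G j).ncard = 2)
    (hVi : Vm G f θ i w = 0) (hVj : Vm G f θ j w = 0) : w k = 0 := by
  have hji : G.t j i = some k := (G.symm j i).trans hedge
  have hkci : k ∈ colorSet G i := mem_colorSet hedge
  have hkcj : k ∈ colorSet G j := mem_colorSet hji
  have hiNI := mem_NI_of_edge hedge
  have hjNI := mem_NI_of_edge hji
  have h2j : two G j := hnj
  -- 1-color side equations
  have e1 := (Vm_one G f θ hni hkci w).symm.trans hVi
  rw [contrib_one_eq G f θ hni] at e1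
  have A1 := congrFun e1 0
  have A2 := congrFun e1 1
  have A3 := congrFun e1 2
  simp only [rows_zero, rows_one, rows_two, Pi.zero_apply] at A1 A2 A3
  -- 2-color side equations
  have e2 := (Vm_two G f θ h2j hkcj w).symm.trans hVj
  by_cases hs : IsSpecial2Color G j
  · by_cases hkl : k = lc hs
    · -- edge on the light color of the special node j
      have hocne : oc G j k ≠ lc hs := by
        rw [← hkl]; exact oc_ne h2j hkcj
      rw [contrib_sp_light G f θ hnj hs hkl,
        contrib_sp_heavy G f θ hnj hs hocne] at e2
      have B3 := congrFun e2 2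
      simp only [Pi.add_apply, rows_two, Pi.zero_apply, add_zero] at B3
      simp only [arow] at B3
      have hprod : f j * f (rp G (oc G j k) j) * θ ≠ f i := hθ2 j i k hji
      have H3 : w k 3 = 0 := by
        refine cancel3 (a := f j * θ * Lam G f θ j k) (b := f i * θ) ?_ ?_
        · linear_combination B3 - A3 - (f j * θ) * A1 - (Lam G f θ j k) * A2
        · intro h
          apply hprod
          have h' : (f j * f (rp G (oc G j k) j) * θ) * θ = f i * θ := by
            simp only [Lam] at h
            linear_combination h
          exact mul_right_cancel₀ hθ0 h'
      have H0 : w k 0 = 0 := by linear_combination A3 - (f i * θ) * H3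
      exact funext4 H0 A1 A2 H3
    · -- edge on the heavy color of the special node j
      have hk2l : oc G j k = lc hs :=
        (oc_unique h2j hkcj (lc_mem hs) (fun h => hkl h.symm)).symm
      rw [contrib_sp_heavy G f θ hnj hs hkl,
        contrib_sp_light G f θ hnj hs hk2l] at e2
      have B1 := congrFun e2 0
      have B2 := congrFun e2 1
      simp only [Pi.add_apply, rows_zero, rows_one, Pi.zero_apply, add_zero] at B1 B2
      have hLam0 : Lam G f θ j k ≠ 0 :=
        mul_ne_zero (hf0 _ (rp_mem_NI hjNI)) hθ0
      have H0 : w k 0 = 0 := by linear_combination B1 - (Lam G f θ j k) * A2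
      have H3 : w k 3 = 0 := by
        have h' : Lam G f θ j k * w k 3 = 0 := by linear_combination B2 - A1
        exact (mul_eq_zero.mp h').resolve_left hLam0
      exact funext4 H0 A1 A2 H3
  · -- j is a normal 2-color node
    have Bmain : arow G f θ j k (w k) = 0 := by
      by_cases hlt : k < oc G j k
      · rw [contrib_n_lo G f θ hnj hs hlt,
          contrib_n_hi G f θ hnj hs
            (by rw [oc_oc h2j hkcj]; exact not_lt.mpr hlt.le)] at e2
        have B0 := congrFun e2 0
        simpa only [Pi.add_apply, rows_zero, Pi.zero_apply, add_zero] using B0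
      · rw [contrib_n_hi G f θ hnj hs hlt,
          contrib_n_lo G f θ hnj hs
            (by rw [oc_oc h2j hkcj]
                exact lt_of_le_of_ne (not_lt.mp hlt) (oc_ne h2j hkcj))] at e2
        have B0 := congrFun e2 1
        simpa only [Pi.add_apply, rows_one, Pi.zero_apply, add_zero] using B0
    simp only [arow] at Bmain
    have hprod : f j * f (rp G (oc G j k) j) * θ ≠ f i := hθ2 j i k hji
    have H3 : w k 3 = 0 := by
      refine cancel3 (a := f j * θ * Lam G f θ j k) (b := f i * θ) ?_ ?_
      · linear_combination Bmain - A3 - (f j * θ) * A1 - (Lam G f θ j k) * A2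
      · intro h
        apply hprod
        have h' : (f j * f (rp G (oc G j k) j) * θ) * θ = f i * θ := by
          simp only [Lam] at h
          linear_combination h
        exact mul_right_cancel₀ hθ0 h'
    have H0 : w k 0 = 0 := by linear_combination A3 - (f i * θ) * H3
    exact funext4 H0 A1 A2 H3

/-- k is not the light color of a special node adjacent to a 2-color node via k -/
lemma ne_lc_of_two_neighbor {x y : Fin N} {k : Fin K} (hs : IsSpecial2Color G x)
    (hxy : G.t x y = some k) (h2y : two G y) : k ≠ lc hs := by
  intro h
  have h1 := lc_one hs y (h ▸ hxy)
  rw [IsMColor] at h1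
  rw [two] at h2y
  omega

/-- the component of a special node in its light color is a singleton -/
lemma rp_oc_eq_self {x : Fin N} {k : Fin K} (hs : IsSpecial2Color G x)
    (h2x : two G x) (hkc : k ∈ colorSet G x) (hkl : k ≠ lc hs) :
    rp G (oc G x k) x = x := by
  have hocl : oc G x k = lc hs :=
    (oc_unique h2x hkc (lc_mem hs) (fun h => hkl h.symm)).symm
  apply rp_eq_self
  intro y hy
  have hy1 := lc_one hs y (hocl ▸ hy.2.2)
  have hy2 := hy.2.1
  rw [IsMColor] at hy1
  rw [two] at hy2
  omega

lemma rp_eq_of_stp {c : Fin K} {i j : Fin N} (h : stp G c i j) :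
    rp G c i = rp G c j := rp_eq_of_conn (Relation.EqvGen.rel _ _ h)

/-- equations of a normal 2-color node -/
lemma extract_normal {p : ℕ} {f : Fin N → ZMod p} {θ : ZMod p}
    {x : Fin N} {k : Fin K} {w : Fin K → Fin 4 → ZMod p}
    (hnx : (colorSet G x).ncard = 2) (hns : ¬ IsSpecial2Color G x)
    (hkx : k ∈ colorSet G x) (hVx : Vm G f θ x w = 0) :
    arow G f θ x k (w k) = 0 ∧ arow G f θ x (oc G x k) (w (oc G x k)) = 0 ∧
      (w k 1 + Lam G f θ x k * w k 3)
        - (w (oc G x k) 1 + Lam G f θ x (oc G x k) * w (oc G x k) 3) = 0 := by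
  have h2x : two G x := hnx
  have e := (Vm_two G f θ h2x hkx w).symm.trans hVx
  by_cases hlt : k < oc G x k
  · rw [contrib_n_lo G f θ hnx hns hlt,
      contrib_n_hi G f θ hnx hns
        (by rw [oc_oc h2x hkx]; exact not_lt.mpr hlt.le)] at e
    have E0 := congrFun e 0
    have E1 := congrFun e 1
    have E2 := congrFun e 2
    simp only [Pi.add_apply, rows_zero, rows_one, rows_two, Pi.zero_apply,
      add_zero, zero_add] at E0 E1 E2
    exact ⟨E0, E1, by linear_combination E2⟩
  · rw [contrib_n_hi G f θ hnx hns hlt,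
      contrib_n_lo G f θ hnx hns
        (by rw [oc_oc h2x hkx]
            exact lt_of_le_of_ne (not_lt.mp hlt) (oc_ne h2x hkx))] at e
    have E0 := congrFun e 0
    have E1 := congrFun e 1
    have E2 := congrFun e 2
    simp only [Pi.add_apply, rows_zero, rows_one, rows_two, Pi.zero_apply,
      add_zero, zero_add] at E0 E1 E2
    exact ⟨E1, E0, by linear_combination -E2⟩

/-- equations of a special 2-color node on its heavy color -/
lemma extract_special {p : ℕ} {f : Fin N → ZMod p} {θ : ZMod p}
    {x : Fin N} {k : Fin K} {w : Fin K → Fin 4 → ZMod p}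
    (hnx : (colorSet G x).ncard = 2) (hs : IsSpecial2Color G x)
    (hkx : k ∈ colorSet G x) (hkl : k ≠ lc hs) (hVx : Vm G f θ x w = 0) :
    w k 0 + Lam G f θ x k * w k 2 = 0 ∧ w k 1 + Lam G f θ x k * w k 3 = 0 ∧
      arow G f θ x (oc G x k) (w (oc G x k)) = 0 := by
  have h2x : two G x := hnx
  have e := (Vm_two G f θ h2x hkx w).symm.trans hVx
  have hocl : oc G x k = lc hs :=
    (oc_unique h2x hkx (lc_mem hs) (fun h => hkl h.symm)).symm
  rw [contrib_sp_heavy G f θ hnx hs hkl,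
    contrib_sp_light G f θ hnx hs hocl] at e
  have E0 := congrFun e 0
  have E1 := congrFun e 1
  have E2 := congrFun e 2
  simp only [Pi.add_apply, rows_zero, rows_one, rows_two, Pi.zero_apply,
    add_zero, zero_add] at E0 E1 E2
  exact ⟨E0, E1, E2⟩

/-- both endpoints special 2-color -/
lemma ker22SS {i j : Fin N} {k : Fin K} {w : Fin K → Fin 4 → ZMod p}
    (hf : Set.InjOn f (NI G)) (hθ0 : θ ≠ 0)
    (hedge : G.t i j = some k)
    (hni : (colorSet G i).ncard = 2) (hnj : (colorSet G j).ncard = 2)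
    (hsi : IsSpecial2Color G i) (hsj : IsSpecial2Color G j)
    (hVi : Vm G f θ i w = 0) (hVj : Vm G f θ j w = 0) : w k = 0 := by
  have hji : G.t j i = some k := (G.symm j i).trans hedge
  have hkci : k ∈ colorSet G i := mem_colorSet hedge
  have hkcj : k ∈ colorSet G j := mem_colorSet hji
  have hiNI := mem_NI_of_edge hedge
  have hjNI := mem_NI_of_edge hji
  have hfij : f i ≠ f j := fun h => edge_ne hedge (hf hiNI hjNI h)
  have hkli : k ≠ lc hsi := ne_lc_of_two_neighbor hsi hedge hnj
  have hklj : k ≠ lc hsj := ne_lc_of_two_neighbor hsj hji hni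
  obtain ⟨Si0, Si1, _⟩ := extract_special hni hsi hkci hkli hVi
  obtain ⟨Sj0, Sj1, _⟩ := extract_special hnj hsj hkcj hklj hVj
  have hrpi : rp G (oc G i k) i = i := rp_oc_eq_self hsi hni hkci hkli
  have hrpj : rp G (oc G j k) j = j := rp_oc_eq_self hsj hnj hkcj hklj
  have hΛ : Lam G f θ i k ≠ Lam G f θ j k := by
    unfold Lam
    rw [hrpi, hrpj]
    exact fun h => hfij (mul_right_cancel₀ hθ0 h)
  have H2 : w k 2 = 0 := cancel3 (by linear_combination Si0 - Sj0) hΛ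
  have H3 : w k 3 = 0 := cancel3 (by linear_combination Si1 - Sj1) hΛ
  have H0 : w k 0 = 0 := by linear_combination Si0 - Lam G f θ i k * H2
  have H1 : w k 1 = 0 := by linear_combination Si1 - Lam G f θ i k * H3
  exact funext4 H0 H1 H2 H3

/-- normal 2-color node `i`, special 2-color node `j` -/
lemma ker22NS
    (h3 : ¬ ∃ i j, IsNormal2Color G i ∧ G.t i j ≠ none ∧ IsMColor G j 2 ∧
      colorSet G i ≠ colorSet G j)
    (hres : ∀ i j k, G.t i j = some k → ∀ k', k' ≠ k →
      ∀ P (v : Fin (P + 1) → Fin N), IsPath G k' P v →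
        v 0 = i → v (Fin.last P) = j → ∃ q : Fin (P + 1), IsMColor G (v q) 1)
    {i j : Fin N} {k : Fin K} {w : Fin K → Fin 4 → ZMod p}
    (hf : Set.InjOn f (NI G)) (hθ0 : θ ≠ 0)
    (hedge : G.t i j = some k)
    (hni : (colorSet G i).ncard = 2) (hnj : (colorSet G j).ncard = 2)
    (hsi : ¬ IsSpecial2Color G i) (hsj : IsSpecial2Color G j)
    (hVi : Vm G f θ i w = 0) (hVj : Vm G f θ j w = 0) : w k = 0 := by
  have hji : G.t j i = some k := (G.symm j i).trans hedge
  have hkci : k ∈ colorSet G i := mem_colorSet hedge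
  have hkcj : k ∈ colorSet G j := mem_colorSet hji
  have hiNI := mem_NI_of_edge hedge
  have hjNI := mem_NI_of_edge hji
  have hfij : f i ≠ f j := fun h => edge_ne hedge (hf hiNI hjNI h)
  have haij : f i * θ ≠ f j * θ := fun h => hfij (mul_right_cancel₀ hθ0 h)
  have hklj : k ≠ lc hsj := ne_lc_of_two_neighbor hsj hji hni
  -- same color sets via h3
  have hset : colorSet G i = colorSet G j := by
    by_contra hne
    exact h3 ⟨i, j, ⟨hni, hsi⟩, by rw [hedge]; exact fun h => (nomatch h),
      hnj, hne⟩
  have hoc : oc G i k = oc G j k := oc_congr hni hnj hset hkci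
  have hocnek : oc G i k ≠ k := oc_ne hni hkci
  obtain ⟨Pi, Qi, Ri⟩ := extract_normal hni hsi hkci hVi
  obtain ⟨Sj0, Sj1, Qj⟩ := extract_special hnj hsj hkcj hklj hVj
  -- shared k-side component: Lam i (oc i k) = Lam j (oc j k)
  have hocj : oc G j (oc G i k) = k := by
    rw [hoc]; exact oc_oc hnj hkcj
  have hmu : Lam G f θ i (oc G i k) = Lam G f θ j (oc G i k) := by
    unfold Lam
    rw [oc_oc hni hkci, hocj, rp_eq_of_stp ⟨hni, hnj, hedge⟩]
  -- different (oc i k)-side components via hres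
  have hΛ : Lam G f θ i k ≠ Lam G f θ j k := by
    unfold Lam
    rw [← hoc]
    intro h
    have hfeq : f (rp G (oc G i k) i) = f (rp G (oc G i k) j) :=
      mul_right_cancel₀ hθ0 h
    have hrpne : rp G (oc G i k) i ≠ rp G (oc G i k) j := fun hr =>
      not_conn_of_hres hres hedge hni hnj hocnek (conn_of_rp_eq hr)
    exact hrpne (hf (rp_mem_NI hiNI) (rp_mem_NI hjNI) hfeq)
  rw [← hoc] at Qj
  rw [hmu] at Ri
  simp only [arow] at Qi Qj
  have hu : w (oc G i k) 1 + Lam G f θ j (oc G i k) * w (oc G i k) 3 = 0 := by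
    refine cancel3 (a := f i * θ) (b := f j * θ) ?_ haij
    linear_combination Qi - Qj - (w (oc G i k) 2 + f i * θ * w (oc G i k) 3) * hmu
  have Ai : w k 1 + Lam G f θ i k * w k 3 = 0 := by linear_combination Ri + hu
  have H3 : w k 3 = 0 := cancel3 (by linear_combination Ai - Sj1) hΛ
  have H1 : w k 1 = 0 := by linear_combination Ai - Lam G f θ i k * H3
  simp only [arow] at Pi
  have Pi' : w k 0 + Lam G f θ i k * w k 2 = 0 := by
    linear_combination Pi - f i * θ * H1 - f i * θ * Lam G f θ i k * H3
  have H2 : w k 2 = 0 := cancel3 (by linear_combination Pi' - Sj0) hΛ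
  have H0 : w k 0 = 0 := by linear_combination Pi' - Lam G f θ i k * H2
  exact funext4 H0 H1 H2 H3

/-- both endpoints normal 2-color -/
lemma ker22NN
    (h3 : ¬ ∃ i j, IsNormal2Color G i ∧ G.t i j ≠ none ∧ IsMColor G j 2 ∧
      colorSet G i ≠ colorSet G j)
    (hres : ∀ i j k, G.t i j = some k → ∀ k', k' ≠ k →
      ∀ P (v : Fin (P + 1) → Fin N), IsPath G k' P v →
        v 0 = i → v (Fin.last P) = j → ∃ q : Fin (P + 1), IsMColor G (v q) 1)
    {i j : Fin N} {k : Fin K} {w : Fin K → Fin 4 → ZMod p}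
    (hf : Set.InjOn f (NI G)) (hθ0 : θ ≠ 0)
    (hedge : G.t i j = some k)
    (hni : (colorSet G i).ncard = 2) (hnj : (colorSet G j).ncard = 2)
    (hsi : ¬ IsSpecial2Color G i) (hsj : ¬ IsSpecial2Color G j)
    (hVi : Vm G f θ i w = 0) (hVj : Vm G f θ j w = 0) : w k = 0 := by
  have hji : G.t j i = some k := (G.symm j i).trans hedge
  have hkci : k ∈ colorSet G i := mem_colorSet hedge
  have hkcj : k ∈ colorSet G j := mem_colorSet hji
  have hiNI := mem_NI_of_edge hedge
  have hjNI := mem_NI_of_edge hji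
  have hfij : f i ≠ f j := fun h => edge_ne hedge (hf hiNI hjNI h)
  have haij : f i * θ ≠ f j * θ := fun h => hfij (mul_right_cancel₀ hθ0 h)
  have hset : colorSet G i = colorSet G j := by
    by_contra hne
    exact h3 ⟨i, j, ⟨hni, hsi⟩, by rw [hedge]; exact fun h => (nomatch h),
      hnj, hne⟩
  have hoc : oc G i k = oc G j k := oc_congr hni hnj hset hkci
  have hocnek : oc G i k ≠ k := oc_ne hni hkci
  obtain ⟨Pi, Qi, Ri⟩ := extract_normal hni hsi hkci hVi
  obtain ⟨Pj, Qj, Rj⟩ := extract_normal hnj hsj hkcj hVj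
  have hocj : oc G j (oc G i k) = k := by
    rw [hoc]; exact oc_oc hnj hkcj
  have hmu : Lam G f θ i (oc G i k) = Lam G f θ j (oc G i k) := by
    unfold Lam
    rw [oc_oc hni hkci, hocj, rp_eq_of_stp ⟨hni, hnj, hedge⟩]
  have hΛ : Lam G f θ i k ≠ Lam G f θ j k := by
    unfold Lam
    rw [← hoc]
    intro h
    have hfeq : f (rp G (oc G i k) i) = f (rp G (oc G i k) j) :=
      mul_right_cancel₀ hθ0 h
    have hrpne : rp G (oc G i k) i ≠ rp G (oc G i k) j := fun hr =>
      not_conn_of_hres hres hedge hni hnj hocnek (conn_of_rp_eq hr)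
    exact hrpne (hf (rp_mem_NI hiNI) (rp_mem_NI hjNI) hfeq)
  rw [← hoc] at Qj Rj
  simp only [arow] at Qi Qj
  have hu : w (oc G i k) 1 + Lam G f θ j (oc G i k) * w (oc G i k) 3 = 0 := by
    refine cancel3 (a := f i * θ) (b := f j * θ) ?_ haij
    linear_combination Qi - Qj - (w (oc G i k) 2 + f i * θ * w (oc G i k) 3) * hmu
  rw [hmu] at Ri
  have Ai : w k 1 + Lam G f θ i k * w k 3 = 0 := by linear_combination Ri + hu
  have Aj : w k 1 + Lam G f θ j k * w k 3 = 0 := by linear_combination Rj + hu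
  have H3 : w k 3 = 0 := cancel3 (by linear_combination Ai - Aj) hΛ
  have H1 : w k 1 = 0 := by linear_combination Ai - Lam G f θ i k * H3
  simp only [arow] at Pi Pj
  have Pi' : w k 0 + Lam G f θ i k * w k 2 = 0 := by
    linear_combination Pi - f i * θ * H1 - f i * θ * Lam G f θ i k * H3
  have Pj' : w k 0 + Lam G f θ j k * w k 2 = 0 := by
    linear_combination Pj - f j * θ * H1 - f j * θ * Lam G f θ j k * H3
  have H2 : w k 2 = 0 := cancel3 (by linear_combination Pi' - Pj') hΛ
  have H0 : w k 0 = 0 := by linear_combination Pi' - Lam G f θ i k * H2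
  exact funext4 H0 H1 H2 H3


/-- the full decodability kernel lemma -/
lemma kernel
    (h1 : ¬ ∃ i, 4 ≤ (colorSet G i).ncard)
    (h2 : ¬ ∃ i j, IsMColor G i 3 ∧ G.t i j ≠ none ∧ 2 ≤ (colorSet G j).ncard)
    (h3 : ¬ ∃ i j, IsNormal2Color G i ∧ G.t i j ≠ none ∧ IsMColor G j 2 ∧
      colorSet G i ≠ colorSet G j)
    (hres : ∀ i j k, G.t i j = some k → ∀ k', k' ≠ k →
      ∀ P (v : Fin (P + 1) → Fin N), IsPath G k' P v →
        v 0 = i → v (Fin.last P) = j → ∃ q : Fin (P + 1), IsMColor G (v q) 1)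
    (hf : Set.InjOn f (NI G)) (hf0 : ∀ x ∈ NI G, f x ≠ 0) (hθ0 : θ ≠ 0)
    (hθ2 : ∀ a b c, G.t a b = some c → f a * f (rp G (oc G a c) a) * θ ≠ f b)
    {i j : Fin N} {k : Fin K} {w : Fin K → Fin 4 → ZMod p}
    (hedge : G.t i j = some k)
    (hVi : Vm G f θ i w = 0) (hVj : Vm G f θ j w = 0) : w k = 0 := by
  have hji : G.t j i = some k := (G.symm j i).trans hedge
  have hilow : 1 ≤ (colorSet G i).ncard := ncard_pos hedge
  have hjlow : 1 ≤ (colorSet G j).ncard := ncard_pos hji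
  have hihigh : (colorSet G i).ncard ≤ 3 := by
    by_contra h; exact h1 ⟨i, by omega⟩
  have hjhigh : (colorSet G j).ncard ≤ 3 := by
    by_contra h; exact h1 ⟨j, by omega⟩
  have hci : (colorSet G i).ncard = 1 ∨ (colorSet G i).ncard = 2 ∨
      (colorSet G i).ncard = 3 := by omega
  have hcj : (colorSet G j).ncard = 1 ∨ (colorSet G j).ncard = 2 ∨
      (colorSet G j).ncard = 3 := by omega
  rcases hci with hni | hni | hni <;> rcases hcj with hnj | hnj | hnj
  · exact ker11 hf hθ0 hedge hni hnj hVi hVj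
  · exact ker12 hf hf0 hθ0 hθ2 hedge hni hnj hVi hVj
  · exact ker13 hf hθ0 hedge hni hnj hVi hVj
  · exact ker12 hf hf0 hθ0 hθ2 hji hnj hni hVj hVi
  · by_cases hsi : IsSpecial2Color G i <;> by_cases hsj : IsSpecial2Color G j
    · exact ker22SS hf hθ0 hedge hni hnj hsi hsj hVi hVj
    · exact ker22NS h3 hres hf hθ0 hji hnj hni hsj hsi hVj hVi
    · exact ker22NS h3 hres hf hθ0 hedge hni hnj hsi hsj hVi hVj
    · exact ker22NN h3 hres hf hθ0 hedge hni hnj hsi hsj hVi hVj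
  · exact absurd ⟨j, i, hnj, by rw [hji]; exact fun h => (nomatch h),
      by omega⟩ h2
  · exact ker13 hf hθ0 hji hnj hni hVj hVi
  · exact absurd ⟨i, j, hni, by rw [hedge]; exact fun h => (nomatch h),
      by omega⟩ h2
  · exact absurd ⟨i, j, hni, by rw [hedge]; exact fun h => (nomatch h),
      by omega⟩ h2


end Kernel

/-! ### counting -/

/-- the edge set -/
def ES (G : LabeledGraph N K) : Set (Sym2 (Fin N)) :=
  {e : Sym2 (Fin N) | ∃ i j, e = s(i, j) ∧ G.t i j ≠ none}

lemma edgeCount_eq (G : LabeledGraph N K) : edgeCount G = (ES G).ncard := rfl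

lemma biUnion_ncard_le {α β : Type*} [Finite α] [DecidableEq β]
    (t : Finset β) (g : β → Set α) :
    (⋃ b ∈ t, g b).ncard ≤ ∑ b ∈ t, (g b).ncard := by
  classical
  induction t using Finset.induction with
  | empty => simp
  | @insert a s hnotmem ih =>
      rw [Finset.sum_insert hnotmem]
      refine le_trans ?_ (Nat.add_le_add_left ih _)
      rw [show (⋃ b ∈ insert a s, g b) = g a ∪ ⋃ b ∈ s, g b by
        simp [Set.biUnion_insert]]
      exact Set.ncard_union_le _ _

lemma ncard_NI_le (G : LabeledGraph N K) : (NI G).ncard ≤ 2 * edgeCount G := by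
  classical
  have hESfin : (ES G).Finite := Set.toFinite _
  set t := hESfin.toFinset with ht
  have hsub : NI G ⊆ ⋃ e ∈ t, {x | x ∈ e} := by
    rintro x ⟨y, hy⟩
    refine Set.mem_iUnion₂.mpr ⟨s(x, y), ?_, Sym2.mem_mk_left x y⟩
    rw [Set.Finite.mem_toFinset]
    exact ⟨x, y, rfl, hy⟩
  refine le_trans (Set.ncard_le_ncard hsub (Set.toFinite _)) ?_
  refine le_trans (biUnion_ncard_le t _) ?_
  have hbound : ∀ e ∈ t, ({x | x ∈ e} : Set (Fin N)).ncard ≤ 2 := by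
    intro e _
    induction e with
    | _ a b =>
        have h : {x | x ∈ s(a, b)} = ({a, b} : Set (Fin N)) := by
          ext z; simp [Sym2.mem_iff]
        rw [h]
        exact le_trans (Set.ncard_insert_le _ _) (by simp)
  refine le_trans (Finset.sum_le_card_nsmul t _ 2 hbound) ?_
  rw [smul_eq_mul, edgeCount_eq, mul_comm]
  rw [Set.ncard_eq_toFinset_card _ hESfin]

section Bad

variable {p : ℕ} [Fact p.Prime] (G : LabeledGraph N K) (f : Fin N → ZMod p)

/-- the set of bad values of θ -/
def badSet : Set (ZMod p) :=
  {0} ∪ {x | ∃ a b c, G.t a b = some c ∧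
    f a * f (rp G (oc G a c) a) * x = f b}

lemma ncard_badSet_le (hf0 : ∀ x ∈ NI G, f x ≠ 0) :
    (badSet G f).ncard ≤ 1 + 2 * edgeCount G := by
  classical
  have hESfin : (ES G).Finite := Set.toFinite _
  set t := hESfin.toFinset with ht
  set cand : Fin N → Fin N → ZMod p := fun a b =>
    Option.casesOn (G.t a b) 0
      (fun c => (f a * f (rp G (oc G a c) a))⁻¹ * f b) with hcand
  set gbad : Sym2 (Fin N) → Set (ZMod p) := fun e =>
    {x | ∃ a b c, e = s(a, b) ∧ G.t a b = some c ∧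
      f a * f (rp G (oc G a c) a) * x = f b} with hgbad
  have hsub : badSet G f ⊆ {0} ∪ ⋃ e ∈ t, gbad e := by
    rintro x (hx | ⟨a, b, c, habc, hsol⟩)
    · exact Or.inl hx
    · refine Or.inr (Set.mem_iUnion₂.mpr ⟨s(a, b), ?_, ⟨a, b, c, rfl, habc, hsol⟩⟩)
      rw [Set.Finite.mem_toFinset]
      exact ⟨a, b, rfl, by rw [habc]; exact fun h => nomatch h⟩
  refine le_trans (Set.ncard_le_ncard hsub (Set.toFinite _)) ?_
  refine le_trans (Set.ncard_union_le _ _) ?_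
  have h1 : ({0} : Set (ZMod p)).ncard = 1 := Set.ncard_singleton 0
  have hbound : ∀ e ∈ t, (gbad e).ncard ≤ 2 := by
    intro e _
    induction e with
    | _ a0 b0 =>
        have hsub2 : gbad s(a0, b0) ⊆ {cand a0 b0, cand b0 a0} := by
          rintro x ⟨a, b, c, he, hedge, hsol⟩
          have haNI : a ∈ NI G := mem_NI_of_edge hedge
          have hc0 : f a * f (rp G (oc G a c) a) ≠ 0 :=
            mul_ne_zero (hf0 a haNI) (hf0 _ (rp_mem_NI haNI))
          have hxval : x = cand a b := by
            rw [hcand]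
            simp only
            rw [hedge]
            show x = (f a * f (rp G (oc G a c) a))⁻¹ * f b
            rw [← hsol, ← mul_assoc, inv_mul_cancel₀ hc0, one_mul]
          rw [Sym2.eq_iff] at he
          rcases he with ⟨ha, hb⟩ | ⟨ha, hb⟩
          · exact Set.mem_insert_iff.mpr (Or.inl (by rw [hxval, ← ha, ← hb]))
          · refine Set.mem_insert_iff.mpr (Or.inr ?_)
            rw [Set.mem_singleton_iff, hxval, ← hb, ← ha]
        refine le_trans (Set.ncard_le_ncard hsub2 (Set.toFinite _)) ?_
        exact le_trans (Set.ncard_insert_le _ _) (by simp)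
  refine le_trans (Nat.add_le_add_left (biUnion_ncard_le t gbad) _) ?_
  refine le_trans (Nat.add_le_add_left (Finset.sum_le_card_nsmul t _ 2 hbound) _) ?_
  rw [smul_eq_mul, h1, edgeCount_eq]
  rw [Set.ncard_eq_toFinset_card _ hESfin, ← ht]
  omega

end Bad

/-! ### choice of parameters -/

lemma exists_f (G : LabeledGraph N K) (p : ℕ) [Fact p.Prime]
    (hlt : (NI G).ncard < p) :
    ∃ f : Fin N → ZMod p, Set.InjOn f (NI G) ∧ ∀ x ∈ NI G, f x ≠ 0 := by
  classical
  haveI : NeZero p := ⟨(Fact.out : p.Prime).ne_zero⟩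
  haveI : Fintype (NI G) := (Set.toFinite _).fintype
  have hcard : Fintype.card (NI G) = (NI G).ncard := by
    rw [Set.ncard_eq_toFinset_card', Set.toFinset_card]
  have hcard2 : Fintype.card {x : ZMod p // x ≠ 0} = p - 1 := by
    rw [Fintype.card_subtype_compl, Fintype.card_subtype_eq, ZMod.card]
  have hle : Fintype.card (NI G) ≤ Fintype.card {x : ZMod p // x ≠ 0} := by
    rw [hcard, hcard2]; omega
  obtain ⟨emb⟩ := Function.Embedding.nonempty_of_card_le hle
  refine ⟨fun i => if h : i ∈ NI G then (emb ⟨i, h⟩ : {x : ZMod p // x ≠ 0}).1 else 1,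
    ?_, ?_⟩
  · intro a ha b hb hab
    simp only [dif_pos ha, dif_pos hb] at hab
    have := emb.injective (Subtype.ext hab)
    exact Subtype.mk_eq_mk.mp this
  · intro x hx
    simp only [dif_pos hx]
    exact (emb ⟨x, hx⟩).2

lemma exists_theta {p : ℕ} [Fact p.Prime] (S : Set (ZMod p))
    (hlt : S.ncard < p) : ∃ θ : ZMod p, θ ∉ S := by
  haveI : NeZero p := ⟨(Fact.out : p.Prime).ne_zero⟩
  by_contra h
  push_neg at h
  have : S = Set.univ := Set.eq_univ_of_forall h
  rw [this, Set.ncard_univ, Nat.card_eq_fintype_card, ZMod.card] at hlt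
  omega

end RateAux

/-- for arbitrary `K`, if the graph contains no `M`-color node with
`M ≥ 4`, no `3`-color node adjacent to a node carrying at least `2` labels, no normal
`2`-color node adjacent to a `2`-color node with a different color set, and every
residing path of every internal edge contains a `1`-color node, then for every prime
`p > 4|E|` there is a storage code with `S = (Fin 4 → ZMod p)`, `T = (Fin 3 → ZMod p)`,
i.e. rate `4/3` is achievable. -/
theorem rate_four_thirds_achievable_general {N K : ℕ} (G : LabeledGraph N K)
    (h1 : ¬ ∃ i, 4 ≤ (colorSet G i).ncard)
    (h2 : ¬ ∃ i j, IsMColor G i 3 ∧ G.t i j ≠ none ∧ 2 ≤ (colorSet G j).ncard)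
    (h3 : ¬ ∃ i j, IsNormal2Color G i ∧ G.t i j ≠ none ∧ IsMColor G j 2 ∧
      colorSet G i ≠ colorSet G j)
    (hres : ∀ i j k, G.t i j = some k → ∀ k', k' ≠ k →
      ∀ P (v : Fin (P + 1) → Fin N), IsPath G k' P v →
        v 0 = i → v (Fin.last P) = j → ∃ q : Fin (P + 1), IsMColor G (v q) 1)
    (p : ℕ) (hp : p.Prime) (hpE : 4 * edgeCount G < p) :
    ∃ V : Fin N → (Fin K → (Fin 4 → ZMod p)) → (Fin 3 → ZMod p),
      IsStorageCode G (Fin 4 → ZMod p) (Fin 3 → ZMod p) V := by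
  classical
  haveI : Fact p.Prime := ⟨hp⟩
  open RateAux in
  obtain ⟨f, hf, hf0⟩ := RateAux.exists_f G p
    (lt_of_le_of_lt (RateAux.ncard_NI_le G) (by omega))
  have hbadlt : (RateAux.badSet G f).ncard < p := by
    refine lt_of_le_of_lt (RateAux.ncard_badSet_le G f hf0) ?_
    rcases Nat.eq_zero_or_pos (edgeCount G) with h | h
    · rw [h]; have := hp.one_lt; omega
    · omega
  obtain ⟨θ, hθ⟩ := RateAux.exists_theta _ hbadlt
  have hθ0 : θ ≠ 0 := by
    intro h
    exact hθ (Or.inl (by rw [h]; rfl))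
  have hθ2 : ∀ a b c, G.t a b = some c →
      f a * f (RateAux.rp G (RateAux.oc G a c) a) * θ ≠ f b := by
    intro a b c he hEq
    exact hθ (Or.inr ⟨a, b, c, he, hEq⟩)
  refine ⟨RateAux.Vm G f θ, ?_⟩
  intro i j k hk
  refine ⟨fun u v => if h : ∃ w', RateAux.Vm G f θ i w' = u ∧
      RateAux.Vm G f θ j w' = v then h.choose k else 0, ?_⟩
  intro w
  have hex : ∃ w', RateAux.Vm G f θ i w' = RateAux.Vm G f θ i w ∧
      RateAux.Vm G f θ j w' = RateAux.Vm G f θ j w := ⟨w, rfl, rfl⟩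
  simp only [dif_pos hex]
  have hspec := hex.choose_spec
  have hVi : RateAux.Vm G f θ i (hex.choose - w) = 0 := by
    rw [RateAux.Vm_sub, hspec.1, sub_self]
  have hVj : RateAux.Vm G f θ j (hex.choose - w) = 0 := by
    rw [RateAux.Vm_sub, hspec.2, sub_self]
  have hker := RateAux.kernel h1 h2 h3 hres hf hf0 hθ0 hθ2 hk hVi hVj
  have hsub : hex.choose k - w k = 0 := by
    have := congrArg (fun g => g) hker
    calc hex.choose k - w k = (hex.choose - w) k := rfl
    _ = 0 := hker
  exact sub_eq_zero.mp hsub
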